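/- Fix a positive integer m, and for real a > m and x > −(a−m)/2 define, for 1 ≤ i ≤ m, g_i(x) = ((a−i)/2 + x)·log((a−i)/2 + x) − ((a−1)/2 + x)·log((a−1)/2 + x). Let (a_k) and (t_k) be real sequences with a_k → ∞ and t_k/a_k → 0 (hence m·t_k²/a_k² → 0). Then, as k → ∞, Σ_{i=1}^{m} [g_i(t_k) − g_i(0)] − μ_{a_k}·t_k − (σ_{a_k}²/2)·t_k² → 0, where g_i is formed with a = a_k. -/

import Mathlib

open Filter

/-- `μ_a = −(m − a + 3/2)·log(1 − m/(a−1)) + (a−1)m/a`. -/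
noncomputable def muA (m : ℕ) (a : ℝ) : ℝ :=
  -((m : ℝ) - a + 3 / 2) * Real.log (1 - (m : ℝ) / (a - 1)) + (a - 1) * (m : ℝ) / a

/-- `σ_a² = −2[m/(a−1) + log(1 − m/(a−1))]`. -/
noncomputable def sigmaSqA (m : ℕ) (a : ℝ) : ℝ :=
  -2 * ((m : ℝ) / (a - 1) + Real.log (1 - (m : ℝ) / (a - 1)))

/-- `g_i(x) = ((a−i)/2 + x) log((a−i)/2 + x) − ((a−1)/2 + x) log((a−1)/2 + x)`. -/
noncomputable def gFun (a : ℝ) (i : ℕ) (x : ℝ) : ℝ :=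
  ((a - (i : ℝ)) / 2 + x) * Real.log ((a - (i : ℝ)) / 2 + x) -
    ((a - 1) / 2 + x) * Real.log ((a - 1) / 2 + x)

/-- `|log r| ≤ 2|r−1|` for `r ≥ 1/2`. -/
lemma abs_log_le_two_mul {r : ℝ} (hr : 1/2 ≤ r) : |Real.log r| ≤ 2 * |r - 1| := by
  have h0 : (0:ℝ) < r := by linarith
  rcases le_or_gt 1 r with h | h
  · rw [abs_of_nonneg (Real.log_nonneg h), abs_of_nonneg (by linarith)]
    have := Real.log_le_sub_one_of_pos h0
    linarith
  · rw [abs_of_nonpos (Real.log_nonpos h0.le h.le), abs_of_neg (by linarith)]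
    have h1 : Real.log r⁻¹ ≤ r⁻¹ - 1 := Real.log_le_sub_one_of_pos (by positivity)
    rw [Real.log_inv] at h1
    have h2 : r * r⁻¹ = 1 := mul_inv_cancel₀ h0.ne'
    have h3 : r⁻¹ ≤ 2 := by
      nlinarith [mul_nonneg (by linarith : (0:ℝ) ≤ 2*r - 1) (by positivity : (0:ℝ) ≤ r⁻¹)]
    have h4 : r⁻¹ - 1 = (1 - r) * r⁻¹ := by field_simp
    nlinarith [mul_le_mul_of_nonneg_left h3 (by linarith : (0:ℝ) ≤ 1 - r)]

/-- Second-order bound for `x + log(1-x)`. -/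
lemma abs_add_log_le {x : ℝ} (h0 : 0 ≤ x) (h1 : x ≤ 1/8) :
    |x + Real.log (1 - x)| ≤ 2 * x^2 := by
  have hx : |x| < 1 := by rw [abs_of_nonneg h0]; linarith
  have h := Real.abs_log_sub_add_sum_range_le hx 1
  simp only [Finset.sum_range_one, pow_one] at h
  rw [abs_of_nonneg h0] at h
  have hd : x^2 / (1 - x) ≤ 2 * x^2 := by
    rw [div_le_iff₀ (by linarith : (0:ℝ) < 1 - x)]
    nlinarith [mul_nonneg (sq_nonneg x) (show (0:ℝ) ≤ 1 - 2*x by linarith)]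
  calc |x + Real.log (1 - x)| ≤ x^(1+1) / (1 - x) := by simpa using h
    _ = x^2 / (1 - x) := by norm_num
    _ ≤ 2 * x^2 := hd

lemma muA_eq (m : ℕ) {a : ℝ} (h0 : a ≠ 0) (h1 : a - 1 ≠ 0) :
    muA m a = (a - (m:ℝ) - 3/2) * ((m:ℝ)/(a-1) + Real.log (1 - (m:ℝ)/(a-1)))
      + (m:ℝ)*(((m:ℝ)-1/2)*a+1)/(a*(a-1)) := by
  unfold muA
  field_simp
  ring

lemma muA_bound (m : ℕ) (hm : 0 < m) {a : ℝ} (ha : 8*(m:ℝ) + 8 ≤ a) :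
    |muA m a| ≤ 6*((m:ℝ)+1)^2 / a := by
  have hM1 : (1:ℝ) ≤ (m:ℝ) := Nat.one_le_cast.mpr hm
  have hM0 : (0:ℝ) ≤ (m:ℝ) := by linarith
  have ha0 : (0:ℝ) < a := by linarith
  have ha1 : (0:ℝ) < a - 1 := by linarith
  have hx0 : 0 ≤ (m:ℝ) / (a-1) := by positivity
  have hx1 : (m:ℝ) / (a-1) ≤ 1/8 := by
    rw [div_le_iff₀ ha1]; linarith
  have hid := muA_eq m ha0.ne' ha1.ne'
  have hE := abs_add_log_le hx0 hx1
  have h1 : |(a - (m:ℝ) - 3/2) * ((m:ℝ)/(a-1) + Real.log (1 - (m:ℝ)/(a-1)))|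
      ≤ a * (2 * ((m:ℝ)/(a-1))^2) := by
    rw [abs_mul]
    have hA : |a - (m:ℝ) - 3/2| ≤ a := by
      rw [abs_of_nonneg (by linarith)]; linarith
    exact mul_le_mul hA hE (abs_nonneg _) ha0.le
  have h2 : |(m:ℝ)*(((m:ℝ)-1/2)*a+1)/(a*(a-1))| = (m:ℝ)*(((m:ℝ)-1/2)*a+1)/(a*(a-1)) := by
    rw [abs_of_nonneg]
    apply div_nonneg _ (by positivity)
    nlinarith [mul_pos ha0 (show (0:ℝ) < (m:ℝ) - 1/2 by linarith)]
  have b1 : a * (2 * ((m:ℝ)/(a-1))^2) ≤ 4*(m:ℝ)^2/a := by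
    have e : a * (2 * ((m:ℝ)/(a-1))^2) = (2*(m:ℝ)^2*a)/((a-1)^2) := by
      rw [div_pow]; ring
    rw [e, div_le_div_iff₀ (by positivity) ha0]
    nlinarith [mul_nonneg (sq_nonneg (m:ℝ)) (show (0:ℝ) ≤ a^2-4*a+2 by nlinarith)]
  have b2 : (m:ℝ)*(((m:ℝ)-1/2)*a+1)/(a*(a-1)) ≤ 2*(m:ℝ)*((m:ℝ)+1)/a := by
    rw [div_le_div_iff₀ (by positivity) ha0]
    nlinarith [mul_nonneg hM0 (show (0:ℝ) ≤ ((m:ℝ)+5/2)*a - 2*(m:ℝ) - 3 by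
      nlinarith [mul_nonneg (show (0:ℝ) ≤ (m:ℝ)+5/2 by linarith)
        (show (0:ℝ) ≤ a - 8*(m:ℝ) - 8 by linarith)])]
  have b3 : 4*(m:ℝ)^2/a + 2*(m:ℝ)*((m:ℝ)+1)/a ≤ 6*((m:ℝ)+1)^2 / a := by
    rw [← add_div, div_le_div_iff₀ ha0 ha0]
    nlinarith
  calc |muA m a| ≤ |(a - (m:ℝ) - 3/2) * ((m:ℝ)/(a-1) + Real.log (1 - (m:ℝ)/(a-1)))|
        + |(m:ℝ)*(((m:ℝ)-1/2)*a+1)/(a*(a-1))| := by rw [hid]; exact abs_add_le _ _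
    _ ≤ a * (2 * ((m:ℝ)/(a-1))^2) + (m:ℝ)*(((m:ℝ)-1/2)*a+1)/(a*(a-1)) := by
        rw [h2]; linarith
    _ ≤ 4*(m:ℝ)^2/a + 2*(m:ℝ)*((m:ℝ)+1)/a := by linarith
    _ ≤ 6*((m:ℝ)+1)^2 / a := b3

lemma sigmaSqA_bound (m : ℕ) {a : ℝ} (ha : 8*(m:ℝ) + 8 ≤ a) :
    |sigmaSqA m a| ≤ 16*(m:ℝ)^2 / a^2 := by
  set M : ℝ := (m : ℝ) with hM
  have hM0 : 0 ≤ M := Nat.cast_nonneg m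
  have ha0 : (0:ℝ) < a := by linarith
  have ha1 : (0:ℝ) < a - 1 := by linarith
  have hx0 : 0 ≤ M / (a-1) := by positivity
  have hx1 : M / (a-1) ≤ 1/8 := by rw [div_le_iff₀ ha1]; linarith
  have hE := abs_add_log_le hx0 hx1
  have hid : sigmaSqA m a = -2 * (M/(a-1) + Real.log (1 - M/(a-1))) := rfl
  rw [hid, abs_mul]
  have h2 : |(-2 : ℝ)| = 2 := by norm_num
  rw [h2]
  calc 2 * |M/(a-1) + Real.log (1 - M/(a-1))| ≤ 2 * (2 * (M/(a-1))^2) := by linarith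
    _ = 4 * M^2 / (a-1)^2 := by rw [div_pow]; ring
    _ ≤ 16*M^2 / a^2 := by
        rw [div_le_div_iff₀ (by positivity) (by positivity)]
        nlinarith [mul_nonneg (sq_nonneg M) (show (0:ℝ) ≤ 3*a^2 - 8*a + 4 by nlinarith)]

lemma gFun_diff_bound (m : ℕ) (hm : 0 < m) {i : ℕ} (hi1 : 1 ≤ i) (him : i ≤ m) {a t : ℝ}
    (ha : 8*(m:ℝ) + 8 ≤ a) (ht : |t| ≤ a/8) :
    |gFun a i t - gFun a i 0| ≤ 3*(m:ℝ)*|t|/a := by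
  have hm1 : (1:ℝ) ≤ (m:ℝ) := by exact_mod_cast hm
  have him' : (i:ℝ) ≤ (m:ℝ) := by exact_mod_cast him
  have hi1' : (1:ℝ) ≤ (i:ℝ) := by exact_mod_cast hi1
  have ha0 : (0:ℝ) < a := by linarith
  have hma : (m:ℝ) ≤ a/8 - 1 := by linarith
  have htb := abs_le.1 ht
  set c1 : ℝ := (a-1)/2 with hc1
  set ci : ℝ := (a - (i:ℝ))/2 with hci
  have hci_le : ci ≤ c1 := by rw [hci, hc1]; linarith
  have hlb : 7*a/16 ≤ ci := by
    rw [hci]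
    have : (i:ℝ) ≤ a/8 := by linarith
    linarith
  have hub : c1 ≤ a/2 := by rw [hc1]; linarith
  set s : Set ℝ := Set.Icc ci c1 with hs
  set H : ℝ → ℝ := fun c => (c+t)*Real.log (c+t) - c*Real.log c with hH
  set F : ℝ → ℝ := fun c => Real.log (c+t) - Real.log c with hF
  have hderiv : ∀ c ∈ s, HasDerivWithinAt H (F c) s c := by
    intro c hc
    have hc7 : 7*a/16 ≤ c := le_trans hlb hc.1
    have hc0 : (0:ℝ) < c := by linarith
    have hct : (0:ℝ) < c + t := by linarith
    have h1 : HasDerivAt (fun c : ℝ => (c+t)*Real.log (c+t)) ((Real.log (c+t) + 1) * 1) c :=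
      HasDerivAt.comp c (Real.hasDerivAt_mul_log hct.ne') ((hasDerivAt_id c).add_const t)
    have h2 : HasDerivAt (fun c : ℝ => c*Real.log c) (Real.log c + 1) c :=
      Real.hasDerivAt_mul_log hc0.ne'
    have h3 := h1.sub h2
    have he : (Real.log (c+t) + 1) * 1 - (Real.log c + 1) = F c := by rw [hF]; ring
    rw [he] at h3
    exact h3.hasDerivWithinAt
  have hbound : ∀ c ∈ s, ‖F c‖ ≤ 5*|t|/a := by
    intro c hc
    have hc7 : 7*a/16 ≤ c := le_trans hlb hc.1
    have hc0 : (0:ℝ) < c := by linarith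
    have hct : (0:ℝ) < c + t := by linarith
    have hr : F c = Real.log ((c+t)/c) := by
      rw [hF, Real.log_div hct.ne' hc0.ne']
    have hr12 : 1/2 ≤ (c+t)/c := by
      rw [le_div_iff₀ hc0]; linarith
    have hlog := abs_log_le_two_mul hr12
    have hrm : |(c+t)/c - 1| = |t|/c := by
      rw [div_sub_one hc0.ne']
      rw [abs_div, abs_of_pos hc0]
      norm_num
    rw [Real.norm_eq_abs, hr]
    have hfin : 2 * (|t|/c) ≤ 5*|t|/a := by
      have e : 2 * (|t|/c) = (2*|t|)/c := by ring
      rw [e, div_le_div_iff₀ hc0 ha0]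
      nlinarith [abs_nonneg t]
    calc |Real.log ((c+t)/c)| ≤ 2 * |(c+t)/c - 1| := hlog
      _ = 2 * (|t|/c) := by rw [hrm]
      _ ≤ 5*|t|/a := hfin
  have key := Convex.norm_image_sub_le_of_norm_hasDerivWithin_le hderiv hbound
      (convex_Icc _ _) (Set.left_mem_Icc.2 hci_le) (Set.right_mem_Icc.2 hci_le)
  have hg : gFun a i t - gFun a i 0 = H ci - H c1 := by
    simp only [gFun, hH, hci, hc1, add_zero]
    ring
  rw [hg]
  have hnorm : |H ci - H c1| = ‖H c1 - H ci‖ := by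
    rw [Real.norm_eq_abs, abs_sub_comm]
  rw [hnorm]
  have hd : ‖c1 - ci‖ ≤ (m:ℝ)/2 := by
    rw [Real.norm_eq_abs, abs_of_nonneg (by linarith), hc1, hci]
    linarith
  calc ‖H c1 - H ci‖ ≤ 5*|t|/a * ‖c1 - ci‖ := key
    _ ≤ 5*|t|/a * ((m:ℝ)/2) := by
        apply mul_le_mul_of_nonneg_left hd
        positivity
    _ ≤ 3*(m:ℝ)*|t|/a := by
        have e : 5*|t|/a * ((m:ℝ)/2) = (5 * |t| * ((m:ℝ)/2)) / a := by ring
        rw [e, div_le_div_iff₀ ha0 ha0]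
        nlinarith [mul_nonneg (mul_nonneg (abs_nonneg t) (by linarith : (0:ℝ) ≤ (m:ℝ))) ha0.le]

/-- Lemma 4: for fixed `m`, if `a_k → ∞` and `t_k/a_k → 0` then
`Σ_{i=1}^m [g_i(t_k) − g_i(0)] − μ_{a_k} t_k − (σ_{a_k}²/2) t_k² → 0`. -/
theorem gFun_sum_expansion (m : ℕ) (hm : 0 < m) (a t : ℕ → ℝ)
    (ha : Tendsto a atTop atTop)
    (hta : Tendsto (fun k => t k / a k) atTop (nhds 0)) :
    Tendsto (fun k =>
        (∑ i ∈ Finset.Icc 1 m, (gFun (a k) i (t k) - gFun (a k) i 0)) -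
          muA m (a k) * t k - (sigmaSqA m (a k) / 2) * t k ^ 2)
      atTop (nhds 0) := by
  have hm1 : (1:ℝ) ≤ (m:ℝ) := by exact_mod_cast hm
  have hA : ∀ᶠ k in atTop, 8*(m:ℝ)+8 ≤ a k := ha.eventually_ge_atTop _
  have habs : Tendsto (fun k => |t k / a k|) atTop (nhds 0) := by
    simpa using hta.abs
  have hsm : ∀ᶠ k in atTop, |t k / a k| ≤ 1/8 :=
    (habs.eventually_lt_const (by norm_num)).mono fun k h => h.le
  have hEv : ∀ᶠ k in atTop, (8*(m:ℝ)+8 ≤ a k) ∧ |t k| ≤ a k/8 ∧ 0 < a k := by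
    filter_upwards [hA, hsm] with k h1 h2
    have ha0 : 0 < a k := by linarith
    refine ⟨h1, ?_, ha0⟩
    have h3 : |t k| / a k ≤ 1/8 := by rwa [abs_div, abs_of_pos ha0] at h2
    have h4 : |t k| ≤ 1/8 * a k := by
      rw [div_le_iff₀ ha0] at h3; linarith
    linarith
  have hterm : ∀ i ∈ Finset.Icc 1 m,
      Tendsto (fun k => gFun (a k) i (t k) - gFun (a k) i 0) atTop (nhds 0) := by
    intro i hi
    obtain ⟨hi1, him⟩ := Finset.mem_Icc.1 hi
    apply squeeze_zero_norm' (a := fun k => 3*(m:ℝ)*|t k / a k|)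
    · filter_upwards [hEv] with k hk
      obtain ⟨hk1, hk2, hk3⟩ := hk
      have hb := gFun_diff_bound m hm hi1 him hk1 hk2
      have e : 3*(m:ℝ)*|t k / a k| = 3*(m:ℝ)*|t k|/(a k) := by
        rw [abs_div, abs_of_pos hk3, mul_div_assoc]
      rw [Real.norm_eq_abs, e]
      exact hb
    · simpa using habs.const_mul (3*(m:ℝ))
  have hsum : Tendsto (fun k => ∑ i ∈ Finset.Icc 1 m,
      (gFun (a k) i (t k) - gFun (a k) i 0)) atTop (nhds 0) := by
    simpa using tendsto_finset_sum (Finset.Icc 1 m) hterm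
  have h1 : Tendsto (fun k => muA m (a k) * t k) atTop (nhds 0) := by
    apply squeeze_zero_norm' (a := fun k => 6*((m:ℝ)+1)^2 * |t k / a k|)
    · filter_upwards [hEv] with k hk
      obtain ⟨hk1, hk2, hk3⟩ := hk
      have hb := muA_bound m hm hk1
      rw [Real.norm_eq_abs, abs_mul]
      calc |muA m (a k)| * |t k| ≤ 6*((m:ℝ)+1)^2/(a k) * |t k| :=
            mul_le_mul_of_nonneg_right hb (abs_nonneg _)
        _ = 6*((m:ℝ)+1)^2 * |t k / a k| := by
            rw [abs_div, abs_of_pos hk3]; ring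
    · simpa using habs.const_mul (6*((m:ℝ)+1)^2)
  have h2 : Tendsto (fun k => (sigmaSqA m (a k)/2) * t k^2) atTop (nhds 0) := by
    apply squeeze_zero_norm' (a := fun k => 8*(m:ℝ)^2 * (t k / a k)^2)
    · filter_upwards [hEv] with k hk
      obtain ⟨hk1, hk2, hk3⟩ := hk
      have hb := sigmaSqA_bound m hk1
      rw [Real.norm_eq_abs, abs_mul]
      have e1 : |sigmaSqA m (a k)/2| = |sigmaSqA m (a k)|/2 := by
        rw [abs_div]; norm_num
      have e2 : |t k^2| = t k^2 := abs_of_nonneg (sq_nonneg _)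
      rw [e1, e2]
      have e3 : (t k / a k)^2 = t k^2 / (a k)^2 := by rw [div_pow]
      calc |sigmaSqA m (a k)|/2 * t k^2 ≤ (16*(m:ℝ)^2/(a k)^2)/2 * t k^2 := by
            apply mul_le_mul_of_nonneg_right _ (sq_nonneg _)
            linarith
        _ = 8*(m:ℝ)^2 * (t k / a k)^2 := by
            rw [e3]; ring
    · have := (hta.pow 2).const_mul (8*(m:ℝ)^2)
      simpa using this
  have final := (hsum.sub h1).sub h2
  simpa using final
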